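/- Let n ≥ 1, 0 < δ ≤ 1, K ≥ 0, and let g : [−1/2,1/2]^n → ℝ^n satisfy ∥g(z)∥_∞ ≤ δ for all z, ∥g(z) − g(w)∥_∞ ≤ K·∥z − w∥_∞ for all z, w, g(−z) = −g(z) for every z on the boundary of [−1/2,1/2]^n, and g(1/2,…,1/2) = δ·e_1. Let T : [−1,1]^n → [−1/2,1/2]^n truncate each coordinate to [−1/2,1/2], and define h : [−1,1]^n → ℝ^n by: h(x) = (2·min_j x_j − 1)·𝟙 + (2 − 2·min_j x_j)·δ·e_1 if x_i ≥ 1/2 for all i; h(x) = (2·min_j(−x_j) − 1)·(−𝟙) + (2 − 2·min_j(−x_j))·δ·(−e_1) if x_i ≤ −1/2 for all i; and h(x) = g(T(x)) otherwise. Then: (i) h is continuous and takes values in [−1,1]^n; (ii) h(1,…,1) = (1,…,1); (iii) h(−x) = −h(x) for all x on the boundary of [−1,1]^n; (iv) ∥h(x) − h(y)∥_∞ ≤ max{2, K}·∥x − y∥_∞ for all x, y ∈ [−1,1]^n; and (v) for every ε with 0 < ε < δ, any x ∈ [−1,1]^n with ∥h(x)∥_∞ ≤ ε satisfies h(x) =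 g(T(x)). -/

import Mathlib

open Set

/-- `min_j x_j` (as the infimum of the range; for `n ≥ 1` this is the minimum). -/
noncomputable def minCoord (n : ℕ) (x : Fin n → ℝ) : ℝ := sInf (Set.range x)

/-- Coordinatewise truncation `T : [−1,1]^n → [−1/2,1/2]^n`. -/
noncomputable def trunc (n : ℕ) (x : Fin n → ℝ) : Fin n → ℝ :=
  fun i => max (-(1 / 2)) (min (1 / 2) (x i))

open scoped Classical in
/-- The piecewise extension `h` of `g`:
`h(x) = (2·min_j x_j − 1)·𝟙 + (2 − 2·min_j x_j)·δ·e_1` if all `x_i ≥ 1/2`;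
`h(x) = (2·min_j(−x_j) − 1)·(−𝟙) + (2 − 2·min_j(−x_j))·δ·(−e_1)` if all `x_i ≤ −1/2`;
`h(x) = g(T(x))` otherwise. -/
noncomputable def hFun (n : ℕ) (δ : ℝ) (g : (Fin n → ℝ) → Fin n → ℝ)
    (x : Fin n → ℝ) : Fin n → ℝ :=
  if ∀ i, (1 : ℝ) / 2 ≤ x i then
    fun i => (2 * minCoord n x - 1) +
      (2 - 2 * minCoord n x) * δ * (if (i : ℕ) = 0 then 1 else 0)
  else if ∀ i, x i ≤ -(1 / 2 : ℝ) then
    fun i => -((2 * minCoord n (-x) - 1) +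
      (2 - 2 * minCoord n (-x)) * δ * (if (i : ℕ) = 0 then 1 else 0))
  else g (trunc n x)

/- ## minCoord lemmas -/

lemma minCoord_le (hn : 1 ≤ n) (x : Fin n → ℝ) (i : Fin n) : minCoord n x ≤ x i :=
  csInf_le (Set.Finite.bddBelow (Set.finite_range x)) (Set.mem_range_self i)

lemma le_minCoord (hn : 1 ≤ n) (x : Fin n → ℝ) (a : ℝ) (h : ∀ i, a ≤ x i) :
    a ≤ minCoord n x := by
  have : Nonempty (Fin n) := ⟨⟨0, hn⟩⟩
  exact le_csInf (Set.range_nonempty x) (by rintro _ ⟨i, rfl⟩; exact h i)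

lemma exists_minCoord (hn : 1 ≤ n) (x : Fin n → ℝ) : ∃ i, minCoord n x = x i := by
  have : Nonempty (Fin n) := ⟨⟨0, hn⟩⟩
  obtain ⟨i, hi⟩ := (Set.range_nonempty x).csInf_mem (Set.finite_range x)
  exact ⟨i, hi.symm⟩

lemma abs_coord_le_norm {n : ℕ} (x : Fin n → ℝ) (i : Fin n) : |x i| ≤ ‖x‖ := by
  simpa [Real.norm_eq_abs] using norm_le_pi_norm x i

lemma minCoord_lip (hn : 1 ≤ n) (x y : Fin n → ℝ) :
    |minCoord n x - minCoord n y| ≤ ‖x - y‖ := by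
  have key : ∀ u v : Fin n → ℝ, minCoord n u - minCoord n v ≤ ‖u - v‖ := by
    intro u v
    obtain ⟨i, hi⟩ := exists_minCoord hn v
    have h1 : minCoord n u ≤ u i := minCoord_le hn u i
    have h2 : |u i - v i| ≤ ‖u - v‖ := by
      simpa using abs_coord_le_norm (u - v) i
    have := abs_le.1 h2
    linarith [this.2]
  have h2 := key y x
  rw [norm_sub_rev] at h2
  exact abs_le.2 ⟨by linarith, key x y⟩

lemma minCoord_continuous (hn : 1 ≤ n) : Continuous (minCoord n) := by
  have : LipschitzWith 1 (minCoord n) := by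
    apply LipschitzWith.of_dist_le_mul
    intro x y
    simp only [NNReal.coe_one, one_mul, Real.dist_eq, dist_eq_norm]
    exact minCoord_lip hn x y
  exact this.continuous

/- ## trunc lemmas -/

lemma clamp_neg (a : ℝ) : max (-(1/2)) (min (1/2) (-a)) = -(max (-(1/2)) (min (1/2) a)) := by
  rw [max_def, max_def, min_def, min_def]
  split_ifs <;> (try push_neg at *) <;> first | rfl | linarith

lemma trunc_neg (n : ℕ) (x : Fin n → ℝ) : trunc n (-x) = -trunc n x := by
  funext i
  simpa [trunc] using clamp_neg (x i)

lemma trunc_mem (n : ℕ) (x : Fin n → ℝ) (i : Fin n) :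
    trunc n x i ∈ Icc (-(1:ℝ)/2) (1/2) := by
  constructor
  · rw [show (-(1:ℝ)/2) = -(1/2) by norm_num]; exact le_max_left _ _
  · exact max_le (by norm_num) (min_le_left _ _)

lemma clamp_lip (a b : ℝ) :
    |max (-(1/2)) (min (1/2) a) - max (-(1/2)) (min (1/2) b)| ≤ |a - b| := by
  rw [abs_le]
  constructor <;>
  · rw [max_def, max_def, min_def, min_def]
    split_ifs <;> (try push_neg at *) <;> cases abs_cases (a - b) <;> linarith

lemma trunc_lip (n : ℕ) (x y : Fin n → ℝ) : ‖trunc n x - trunc n y‖ ≤ ‖x - y‖ := by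
  rw [pi_norm_le_iff_of_nonneg (norm_nonneg _)]
  intro i
  calc ‖(trunc n x - trunc n y) i‖ = |trunc n x i - trunc n y i| := rfl
    _ ≤ |x i - y i| := clamp_lip (x i) (y i)
    _ ≤ ‖x - y‖ := by simpa [Real.norm_eq_abs] using norm_le_pi_norm (x - y) i

lemma trunc_of_A (n : ℕ) (x : Fin n → ℝ) (h : ∀ i, (1:ℝ)/2 ≤ x i) :
    trunc n x = fun _ => 1/2 := by
  funext i
  rw [trunc, min_eq_left (h i), max_eq_right (by norm_num)]

lemma trunc_of_B (n : ℕ) (x : Fin n → ℝ) (h : ∀ i, x i ≤ -(1/2 : ℝ)) :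
    trunc n x = fun _ => -(1/2) := by
  funext i
  have := h i
  rw [trunc, min_def, max_def]
  split_ifs <;> first | rfl | linarith

/- ## hFun branch lemmas -/

section hFunLemmas

variable {n : ℕ} {δ K : ℝ} {g : (Fin n → ℝ) → Fin n → ℝ}

lemma hFun_of_A {x : Fin n → ℝ} (hA : ∀ i, (1:ℝ)/2 ≤ x i) :
    hFun n δ g x = fun i : Fin n => (2 * minCoord n x - 1) +
      (2 - 2 * minCoord n x) * δ * (if (i : ℕ) = 0 then 1 else 0) := by
  unfold hFun; rw [if_pos hA]

lemma notA_of_B (hn : 1 ≤ n) {x : Fin n → ℝ} (hB : ∀ i, x i ≤ -(1/2 : ℝ)) :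
    ¬ ∀ i, (1:ℝ)/2 ≤ x i := by
  intro h
  have := h ⟨0, hn⟩
  have := hB ⟨0, hn⟩
  linarith

lemma hFun_of_B (hn : 1 ≤ n) {x : Fin n → ℝ} (hB : ∀ i, x i ≤ -(1/2 : ℝ)) :
    hFun n δ g x = fun i : Fin n => -((2 * minCoord n (-x) - 1) +
      (2 - 2 * minCoord n (-x)) * δ * (if (i : ℕ) = 0 then 1 else 0)) := by
  unfold hFun; rw [if_neg (notA_of_B hn hB), if_pos hB]

lemma hFun_of_C {x : Fin n → ℝ} (hnA : ¬ ∀ i, (1:ℝ)/2 ≤ x i)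
    (hnB : ¬ ∀ i, x i ≤ -(1/2 : ℝ)) :
    hFun n δ g x = g (trunc n x) := by
  unfold hFun; rw [if_neg hnA, if_neg hnB]

end hFunLemmas

/- ## coordinate difference bound -/

lemma coordDiff {δ : ℝ} (hδ0 : 0 < δ) (hδ1 : δ ≤ 1) (m1 m2 e : ℝ) (he : e = 0 ∨ e = 1) :
    |((2*m1-1) + (2-2*m1)*δ*e) - ((2*m2-1)+(2-2*m2)*δ*e)| ≤ 2*|m1-m2| := by
  rcases he with rfl | rfl
  · have h : ((2*m1-1) + (2-2*m1)*δ*0) - ((2*m2-1)+(2-2*m2)*δ*0) = 2*(m1-m2) := by ring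
    rw [h, abs_mul, abs_two]
  · have h : ((2*m1-1) + (2-2*m1)*δ*1) - ((2*m2-1)+(2-2*m2)*δ*1) = (1-δ)*(2*(m1-m2)) := by
      ring
    rw [h, abs_mul, abs_mul, abs_two, abs_of_nonneg (by linarith : (0:ℝ) ≤ 1-δ)]
    nlinarith [abs_nonneg (m1-m2)]

section main

variable {n : ℕ} {δ K : ℝ} {g : (Fin n → ℝ) → Fin n → ℝ}

lemma key_lipAA (hn : 1 ≤ n) (hδ0 : 0 < δ) (hδ1 : δ ≤ 1) {x y : Fin n → ℝ}
    (hAx : ∀ i, (1:ℝ)/2 ≤ x i) (hAy : ∀ i, (1:ℝ)/2 ≤ y i) :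
    ‖hFun n δ g x - hFun n δ g y‖ ≤ 2 * ‖x - y‖ := by
  rw [hFun_of_A hAx, hFun_of_A hAy, pi_norm_le_iff_of_nonneg (by positivity)]
  intro i
  have hc := coordDiff hδ0 hδ1 (minCoord n x) (minCoord n y)
    (if (i:ℕ) = 0 then (1:ℝ) else 0) (by split_ifs <;> [right; left] <;> rfl)
  have hm := minCoord_lip hn x y
  simp only [Pi.sub_apply, Real.norm_eq_abs]
  exact hc.trans (by linarith)

lemma key_lipBB (hn : 1 ≤ n) (hδ0 : 0 < δ) (hδ1 : δ ≤ 1) {x y : Fin n → ℝ}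
    (hBx : ∀ i, x i ≤ -(1/2 : ℝ)) (hBy : ∀ i, y i ≤ -(1/2 : ℝ)) :
    ‖hFun n δ g x - hFun n δ g y‖ ≤ 2 * ‖x - y‖ := by
  rw [hFun_of_B hn hBx, hFun_of_B hn hBy, pi_norm_le_iff_of_nonneg (by positivity)]
  intro i
  have hc := coordDiff hδ0 hδ1 (minCoord n (-x)) (minCoord n (-y))
    (if (i:ℕ) = 0 then (1:ℝ) else 0) (by split_ifs <;> [right; left] <;> rfl)
  have hm := minCoord_lip hn (-x) (-y)
  have he : -x - -y = -(x - y) := by ring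
  rw [he, norm_neg] at hm
  simp only [Pi.sub_apply, Real.norm_eq_abs, neg_sub_neg]
  rw [abs_sub_comm]
  exact hc.trans (by linarith)

lemma key_lipCC (hK : 0 ≤ K)
    (hglip : ∀ z w : Fin n → ℝ, (∀ i, z i ∈ Icc (-(1:ℝ)/2) (1/2)) →
      (∀ i, w i ∈ Icc (-(1:ℝ)/2) (1/2)) → ‖g z - g w‖ ≤ K * ‖z - w‖)
    (x y : Fin n → ℝ) :
    ‖g (trunc n x) - g (trunc n y)‖ ≤ K * ‖x - y‖ :=
  (hglip _ _ (trunc_mem n x) (trunc_mem n y)).trans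
    (mul_le_mul_of_nonneg_left (trunc_lip n x y) hK)

lemma hFun_half_A
    (hgcorner : g (fun _ => 1/2) = fun i : Fin n => if (i : ℕ) = 0 then δ else 0)
    {x : Fin n → ℝ} (hA : ∀ i, (1:ℝ)/2 ≤ x i) (hm : minCoord n x = 1/2) :
    hFun n δ g x = g (trunc n x) := by
  rw [hFun_of_A hA, trunc_of_A n x hA, hgcorner, hm]
  funext i; split_ifs <;> norm_num

lemma g_neg_corner (hn : 1 ≤ n)
    (hgodd : ∀ z : Fin n → ℝ, (∀ i, z i ∈ Icc (-(1:ℝ)/2) (1/2)) →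
      (∃ i, |z i| = 1/2) → g (-z) = -(g z))
    (hgcorner : g (fun _ => 1/2) = fun i : Fin n => if (i : ℕ) = 0 then δ else 0) :
    g (fun _ => -(1/2)) = fun i : Fin n => if (i : ℕ) = 0 then -δ else 0 := by
  have h := hgodd (fun _ => 1/2) (fun i => by constructor <;> norm_num)
    ⟨⟨0, hn⟩, by norm_num⟩
  have e : (-(fun _ => 1/2 : Fin n → ℝ)) = fun _ => -(1/2) := by funext i; simp
  rw [e] at h
  rw [h, hgcorner]; funext i; simp only [Pi.neg_apply]; split_ifs <;> simp

lemma hFun_half_B (hn : 1 ≤ n)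
    (hgodd : ∀ z : Fin n → ℝ, (∀ i, z i ∈ Icc (-(1:ℝ)/2) (1/2)) →
      (∃ i, |z i| = 1/2) → g (-z) = -(g z))
    (hgcorner : g (fun _ => 1/2) = fun i : Fin n => if (i : ℕ) = 0 then δ else 0)
    {x : Fin n → ℝ} (hB : ∀ i, x i ≤ -(1/2 : ℝ)) (hm : minCoord n (-x) = 1/2) :
    hFun n δ g x = g (trunc n x) := by
  rw [hFun_of_B hn hB, trunc_of_B n x hB, g_neg_corner hn hgodd hgcorner, hm]
  funext i; split_ifs <;> norm_num

end main

section cross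

variable {n : ℕ} {δ K : ℝ} {g : (Fin n → ℝ) → Fin n → ℝ}

lemma path_cont (x y : Fin n → ℝ) : Continuous (fun τ : ℝ => x + τ • (y - x)) :=
  continuous_const.add (continuous_id.smul continuous_const)

lemma lipAC (hn : 1 ≤ n) (hδ0 : 0 < δ) (hδ1 : δ ≤ 1) (hK : 0 ≤ K)
    (hglip : ∀ z w : Fin n → ℝ, (∀ i, z i ∈ Icc (-(1:ℝ)/2) (1/2)) →
      (∀ i, w i ∈ Icc (-(1:ℝ)/2) (1/2)) → ‖g z - g w‖ ≤ K * ‖z - w‖)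
    (hgcorner : g (fun _ => 1/2) = fun i : Fin n => if (i : ℕ) = 0 then δ else 0)
    {x y : Fin n → ℝ} (hAx : ∀ i, (1:ℝ)/2 ≤ x i)
    (hnAy : ¬ ∀ i, (1:ℝ)/2 ≤ y i) (hnBy : ¬ ∀ i, y i ≤ -(1/2:ℝ)) :
    ‖hFun n δ g x - hFun n δ g y‖ ≤ max 2 K * ‖x - y‖ := by
  obtain ⟨j, hj⟩ : ∃ j, y j < 1/2 := by
    by_contra h; push_neg at h; exact hnAy fun i => h i
  have hmx : (1:ℝ)/2 ≤ minCoord n x := le_minCoord hn x _ hAx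
  have hmy : minCoord n y ≤ 1/2 := (minCoord_le hn y j).trans hj.le
  set f : ℝ → ℝ := fun τ => minCoord n (x + τ • (y - x)) with hf
  have hfc : ContinuousOn f (Icc 0 1) :=
    ((minCoord_continuous hn).comp (path_cont x y)).continuousOn
  have hf0 : f 0 = minCoord n x := by simp only [hf]; congr 1; module
  have hf1 : f 1 = minCoord n y := by simp only [hf]; congr 1; module
  have hmem : (1:ℝ)/2 ∈ Icc (f 1) (f 0) := ⟨hf1 ▸ hmy, hf0 ▸ hmx⟩
  obtain ⟨τ, hτmem, hτ⟩ := intermediate_value_Icc' (by norm_num : (0:ℝ) ≤ 1) hfc hmem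
  set z := x + τ • (y - x) with hz
  have hmz : minCoord n z = 1/2 := hτ
  have hAz : ∀ i, (1:ℝ)/2 ≤ z i := fun i => hmz ▸ minCoord_le hn z i
  obtain ⟨hτ0, hτ1⟩ := hτmem
  have hxz : x - z = τ • (x - y) := by rw [hz]; module
  have hzy : z - y = (1 - τ) • (x - y) := by rw [hz]; module
  have nxz : ‖x - z‖ = τ * ‖x - y‖ := by
    rw [hxz, norm_smul, Real.norm_eq_abs, abs_of_nonneg hτ0]
  have nzy : ‖z - y‖ = (1 - τ) * ‖x - y‖ := by
    rw [hzy, norm_smul, Real.norm_eq_abs, abs_of_nonneg (by linarith)]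
  have b1 : ‖hFun n δ g x - hFun n δ g z‖ ≤ 2 * ‖x - z‖ := key_lipAA hn hδ0 hδ1 hAx hAz
  have b2 : ‖hFun n δ g z - hFun n δ g y‖ ≤ K * ‖z - y‖ := by
    rw [hFun_half_A hgcorner hAz hmz, hFun_of_C hnAy hnBy]
    exact key_lipCC hK hglip z y
  have tri := dist_triangle (hFun n δ g x) (hFun n δ g z) (hFun n δ g y)
  rw [dist_eq_norm, dist_eq_norm, dist_eq_norm] at tri
  rw [nxz] at b1; rw [nzy] at b2
  have hmax2 : (2:ℝ) ≤ max 2 K := le_max_left _ _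
  have hmaxK : K ≤ max 2 K := le_max_right _ _
  have hN : 0 ≤ ‖x - y‖ := norm_nonneg _
  nlinarith [mul_le_mul_of_nonneg_right hmax2 (mul_nonneg hτ0 hN),
    mul_le_mul_of_nonneg_right hmaxK (mul_nonneg (by linarith : (0:ℝ) ≤ 1 - τ) hN)]

lemma lipBC (hn : 1 ≤ n) (hδ0 : 0 < δ) (hδ1 : δ ≤ 1) (hK : 0 ≤ K)
    (hglip : ∀ z w : Fin n → ℝ, (∀ i, z i ∈ Icc (-(1:ℝ)/2) (1/2)) →
      (∀ i, w i ∈ Icc (-(1:ℝ)/2) (1/2)) → ‖g z - g w‖ ≤ K * ‖z - w‖)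
    (hgodd : ∀ z : Fin n → ℝ, (∀ i, z i ∈ Icc (-(1:ℝ)/2) (1/2)) →
      (∃ i, |z i| = 1/2) → g (-z) = -(g z))
    (hgcorner : g (fun _ => 1/2) = fun i : Fin n => if (i : ℕ) = 0 then δ else 0)
    {x y : Fin n → ℝ} (hBx : ∀ i, x i ≤ -(1/2:ℝ))
    (hnAy : ¬ ∀ i, (1:ℝ)/2 ≤ y i) (hnBy : ¬ ∀ i, y i ≤ -(1/2:ℝ)) :
    ‖hFun n δ g x - hFun n δ g y‖ ≤ max 2 K * ‖x - y‖ := by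
  obtain ⟨j, hj⟩ : ∃ j, -(1/2:ℝ) < y j := by
    by_contra h; push_neg at h; exact hnBy fun i => h i
  have hmx : (1:ℝ)/2 ≤ minCoord n (-x) :=
    le_minCoord hn (-x) _ (fun i => by have := hBx i; simp only [Pi.neg_apply]; linarith)
  have hmy : minCoord n (-y) ≤ 1/2 := by
    refine (minCoord_le hn (-y) j).trans ?_
    simp only [Pi.neg_apply]; linarith
  set f : ℝ → ℝ := fun τ => minCoord n (-(x + τ • (y - x))) with hf
  have hfc : ContinuousOn f (Icc 0 1) :=
    ((minCoord_continuous hn).comp (path_cont x y).neg).continuousOn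
  have hf0 : f 0 = minCoord n (-x) := by simp only [hf]; congr 1; module
  have hf1 : f 1 = minCoord n (-y) := by simp only [hf]; congr 1; module
  have hmem : (1:ℝ)/2 ∈ Icc (f 1) (f 0) := ⟨hf1 ▸ hmy, hf0 ▸ hmx⟩
  obtain ⟨τ, hτmem, hτ⟩ := intermediate_value_Icc' (by norm_num : (0:ℝ) ≤ 1) hfc hmem
  set z := x + τ • (y - x) with hz
  have hmz : minCoord n (-z) = 1/2 := hτ
  have hBz : ∀ i, z i ≤ -(1/2:ℝ) := by
    intro i
    have := hmz ▸ minCoord_le hn (-z) i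
    simp only [Pi.neg_apply] at this
    linarith
  obtain ⟨hτ0, hτ1⟩ := hτmem
  have hxz : x - z = τ • (x - y) := by rw [hz]; module
  have hzy : z - y = (1 - τ) • (x - y) := by rw [hz]; module
  have nxz : ‖x - z‖ = τ * ‖x - y‖ := by
    rw [hxz, norm_smul, Real.norm_eq_abs, abs_of_nonneg hτ0]
  have nzy : ‖z - y‖ = (1 - τ) * ‖x - y‖ := by
    rw [hzy, norm_smul, Real.norm_eq_abs, abs_of_nonneg (by linarith)]
  have b1 : ‖hFun n δ g x - hFun n δ g z‖ ≤ 2 * ‖x - z‖ := key_lipBB hn hδ0 hδ1 hBx hBz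
  have b2 : ‖hFun n δ g z - hFun n δ g y‖ ≤ K * ‖z - y‖ := by
    rw [hFun_half_B hn hgodd hgcorner hBz hmz, hFun_of_C hnAy hnBy]
    exact key_lipCC hK hglip z y
  have tri := dist_triangle (hFun n δ g x) (hFun n δ g z) (hFun n δ g y)
  rw [dist_eq_norm, dist_eq_norm, dist_eq_norm] at tri
  rw [nxz] at b1; rw [nzy] at b2
  have hmax2 : (2:ℝ) ≤ max 2 K := le_max_left _ _
  have hmaxK : K ≤ max 2 K := le_max_right _ _
  have hN : 0 ≤ ‖x - y‖ := norm_nonneg _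
  nlinarith [mul_le_mul_of_nonneg_right hmax2 (mul_nonneg hτ0 hN),
    mul_le_mul_of_nonneg_right hmaxK (mul_nonneg (by linarith : (0:ℝ) ≤ 1 - τ) hN)]

lemma lipAB (hn : 1 ≤ n) (hδ0 : 0 < δ) (hδ1 : δ ≤ 1) (hK : 0 ≤ K)
    (hglip : ∀ z w : Fin n → ℝ, (∀ i, z i ∈ Icc (-(1:ℝ)/2) (1/2)) →
      (∀ i, w i ∈ Icc (-(1:ℝ)/2) (1/2)) → ‖g z - g w‖ ≤ K * ‖z - w‖)
    (hgodd : ∀ z : Fin n → ℝ, (∀ i, z i ∈ Icc (-(1:ℝ)/2) (1/2)) →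
      (∃ i, |z i| = 1/2) → g (-z) = -(g z))
    (hgcorner : g (fun _ => 1/2) = fun i : Fin n => if (i : ℕ) = 0 then δ else 0)
    {x y : Fin n → ℝ} (hAx : ∀ i, (1:ℝ)/2 ≤ x i) (hBy : ∀ i, y i ≤ -(1/2:ℝ)) :
    ‖hFun n δ g x - hFun n δ g y‖ ≤ max 2 K * ‖x - y‖ := by
  have hmx : (1:ℝ)/2 ≤ minCoord n x := le_minCoord hn x _ hAx
  have hmy : minCoord n y ≤ 1/2 := by
    refine (minCoord_le hn y ⟨0, hn⟩).trans ?_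
    have := hBy ⟨0, hn⟩; linarith
  set f : ℝ → ℝ := fun τ => minCoord n (x + τ • (y - x)) with hf
  set f2 : ℝ → ℝ := fun τ => minCoord n (-(x + τ • (y - x))) with hf2
  have hfc : ContinuousOn f (Icc 0 1) :=
    ((minCoord_continuous hn).comp (path_cont x y)).continuousOn
  have hf0 : f 0 = minCoord n x := by simp only [hf]; congr 1; module
  have hf1 : f 1 = minCoord n y := by simp only [hf]; congr 1; module
  have hmem : (1:ℝ)/2 ∈ Icc (f 1) (f 0) := ⟨hf1 ▸ hmy, hf0 ▸ hmx⟩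
  obtain ⟨τ1, hτ1mem, hτ1⟩ := intermediate_value_Icc' (by norm_num : (0:ℝ) ≤ 1) hfc hmem
  set z1 := x + τ1 • (y - x) with hz1
  have hmz1 : minCoord n z1 = 1/2 := hτ1
  have hAz1 : ∀ i, (1:ℝ)/2 ≤ z1 i := fun i => hmz1 ▸ minCoord_le hn z1 i
  obtain ⟨hτ10, hτ11⟩ := hτ1mem
  -- second crossing
  have hfc2 : ContinuousOn f2 (Icc τ1 1) :=
    ((minCoord_continuous hn).comp (path_cont x y).neg).continuousOn
  have hf2τ1 : f2 τ1 ≤ 1/2 := by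
    have h := minCoord_le hn (-z1) ⟨0, hn⟩
    have := hAz1 ⟨0, hn⟩
    simp only [Pi.neg_apply] at h
    calc f2 τ1 = minCoord n (-z1) := by rw [hf2]
      _ ≤ 1/2 := by linarith
  have hf21 : (1:ℝ)/2 ≤ f2 1 := by
    have h : f2 1 = minCoord n (-y) := by simp only [hf2]; congr 1; module
    rw [h]
    exact le_minCoord hn (-y) _ (fun i => by have := hBy i; simp only [Pi.neg_apply]; linarith)
  have hmem2 : (1:ℝ)/2 ∈ Icc (f2 τ1) (f2 1) := ⟨hf2τ1, hf21⟩
  obtain ⟨τ2, hτ2mem, hτ2⟩ := intermediate_value_Icc hτ11 hfc2 hmem2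
  set z2 := x + τ2 • (y - x) with hz2
  have hmz2 : minCoord n (-z2) = 1/2 := hτ2
  have hBz2 : ∀ i, z2 i ≤ -(1/2:ℝ) := by
    intro i
    have := hmz2 ▸ minCoord_le hn (-z2) i
    simp only [Pi.neg_apply] at this
    linarith
  obtain ⟨hτ21, hτ22⟩ := hτ2mem
  have hτ20 : (0:ℝ) ≤ τ2 := le_trans hτ10 hτ21
  -- distances
  have nxz : ‖x - z1‖ = τ1 * ‖x - y‖ := by
    rw [show x - z1 = τ1 • (x - y) by rw [hz1]; module, norm_smul, Real.norm_eq_abs,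
      abs_of_nonneg hτ10]
  have nz12 : ‖z1 - z2‖ = (τ2 - τ1) * ‖x - y‖ := by
    rw [show z1 - z2 = (τ2 - τ1) • (x - y) by rw [hz1, hz2]; module, norm_smul,
      Real.norm_eq_abs, abs_of_nonneg (by linarith)]
  have nzy : ‖z2 - y‖ = (1 - τ2) * ‖x - y‖ := by
    rw [show z2 - y = (1 - τ2) • (x - y) by rw [hz2]; module, norm_smul, Real.norm_eq_abs,
      abs_of_nonneg (by linarith)]
  have b1 : ‖hFun n δ g x - hFun n δ g z1‖ ≤ 2 * ‖x - z1‖ := key_lipAA hn hδ0 hδ1 hAx hAz1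
  have b2 : ‖hFun n δ g z1 - hFun n δ g z2‖ ≤ K * ‖z1 - z2‖ := by
    rw [hFun_half_A hgcorner hAz1 hmz1, hFun_half_B hn hgodd hgcorner hBz2 hmz2]
    exact key_lipCC hK hglip z1 z2
  have b3 : ‖hFun n δ g z2 - hFun n δ g y‖ ≤ 2 * ‖z2 - y‖ := key_lipBB hn hδ0 hδ1 hBz2 hBy
  have tri := dist_triangle4 (hFun n δ g x) (hFun n δ g z1) (hFun n δ g z2) (hFun n δ g y)
  rw [dist_eq_norm, dist_eq_norm, dist_eq_norm, dist_eq_norm] at tri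
  rw [nxz] at b1; rw [nz12] at b2; rw [nzy] at b3
  have hmax2 : (2:ℝ) ≤ max 2 K := le_max_left _ _
  have hmaxK : K ≤ max 2 K := le_max_right _ _
  have hN : 0 ≤ ‖x - y‖ := norm_nonneg _
  nlinarith [mul_le_mul_of_nonneg_right hmax2 (mul_nonneg hτ10 hN),
    mul_le_mul_of_nonneg_right hmaxK (mul_nonneg (by linarith : (0:ℝ) ≤ τ2 - τ1) hN),
    mul_le_mul_of_nonneg_right hmax2 (mul_nonneg (by linarith : (0:ℝ) ≤ 1 - τ2) hN)]

end cross

/-- Properties of the extension `h` of `g : [−1/2,1/2]^n → ℝ^n` (with `‖g‖_∞ ≤ δ`,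
`K`-Lipschitz, odd on the boundary of `[−1/2,1/2]^n`, `g(1/2,…,1/2) = δ·e_1`):
(i) `h` is continuous on `[−1,1]^n` and takes values in `[−1,1]^n`; (ii) `h(1,…,1) = (1,…,1)`;
(iii) `h(−x) = −h(x)` on the boundary of `[−1,1]^n`; (iv) `h` is `max{2,K}`-Lipschitz;
(v) for `0 < ε < δ`, any `x` with `‖h(x)‖_∞ ≤ ε` satisfies `h(x) = g(T(x))`. -/
theorem stmt12 (n : ℕ) (hn : 1 ≤ n) (δ K : ℝ) (hδ0 : 0 < δ) (hδ1 : δ ≤ 1) (hK : 0 ≤ K)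
    (g : (Fin n → ℝ) → Fin n → ℝ)
    (hgbound : ∀ z : Fin n → ℝ, (∀ i, z i ∈ Icc (-(1:ℝ)/2) (1/2)) → ‖g z‖ ≤ δ)
    (hglip : ∀ z w : Fin n → ℝ, (∀ i, z i ∈ Icc (-(1:ℝ)/2) (1/2)) →
      (∀ i, w i ∈ Icc (-(1:ℝ)/2) (1/2)) → ‖g z - g w‖ ≤ K * ‖z - w‖)
    (hgodd : ∀ z : Fin n → ℝ, (∀ i, z i ∈ Icc (-(1:ℝ)/2) (1/2)) →
      (∃ i, |z i| = 1/2) → g (-z) = -(g z))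
    (hgcorner : g (fun _ => 1/2) = fun i : Fin n => if (i : ℕ) = 0 then δ else 0) :
    (ContinuousOn (hFun n δ g) {x : Fin n → ℝ | ∀ i, x i ∈ Icc (-1:ℝ) 1} ∧
      ∀ x : Fin n → ℝ, (∀ i, x i ∈ Icc (-1:ℝ) 1) → ∀ i, hFun n δ g x i ∈ Icc (-1:ℝ) 1) ∧
    (hFun n δ g (fun _ => 1) = fun _ => 1) ∧
    (∀ x : Fin n → ℝ, (∀ i, x i ∈ Icc (-1:ℝ) 1) → (∃ i, |x i| = 1) →
      hFun n δ g (-x) = -(hFun n δ g x)) ∧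
    (∀ x y : Fin n → ℝ, (∀ i, x i ∈ Icc (-1:ℝ) 1) → (∀ i, y i ∈ Icc (-1:ℝ) 1) →
      ‖hFun n δ g x - hFun n δ g y‖ ≤ max 2 K * ‖x - y‖) ∧
    (∀ ε : ℝ, 0 < ε → ε < δ → ∀ x : Fin n → ℝ, (∀ i, x i ∈ Icc (-1:ℝ) 1) →
      ‖hFun n δ g x‖ ≤ ε → hFun n δ g x = g (trunc n x)) := by
  have t2 : ∀ u v : Fin n → ℝ, 2 * ‖u - v‖ ≤ max 2 K * ‖u - v‖ := fun u v =>
    mul_le_mul_of_nonneg_right (le_max_left _ _) (norm_nonneg _)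
  -- (iv), valid globally
  have lip : ∀ x y : Fin n → ℝ, ‖hFun n δ g x - hFun n δ g y‖ ≤ max 2 K * ‖x - y‖ := by
    intro x y
    by_cases hAx : ∀ i, (1:ℝ)/2 ≤ x i
    · by_cases hAy : ∀ i, (1:ℝ)/2 ≤ y i
      · exact (key_lipAA hn hδ0 hδ1 hAx hAy).trans (t2 x y)
      · by_cases hBy : ∀ i, y i ≤ -(1/2:ℝ)
        · exact lipAB hn hδ0 hδ1 hK hglip hgodd hgcorner hAx hBy
        · exact lipAC hn hδ0 hδ1 hK hglip hgcorner hAx hAy hBy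
    · by_cases hBx : ∀ i, x i ≤ -(1/2:ℝ)
      · by_cases hAy : ∀ i, (1:ℝ)/2 ≤ y i
        · rw [norm_sub_rev, norm_sub_rev x y]
          exact lipAB hn hδ0 hδ1 hK hglip hgodd hgcorner hAy hBx
        · by_cases hBy : ∀ i, y i ≤ -(1/2:ℝ)
          · exact (key_lipBB hn hδ0 hδ1 hBx hBy).trans (t2 x y)
          · exact lipBC hn hδ0 hδ1 hK hglip hgodd hgcorner hBx hAy hBy
      · by_cases hAy : ∀ i, (1:ℝ)/2 ≤ y i
        · rw [norm_sub_rev, norm_sub_rev x y]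
          exact lipAC hn hδ0 hδ1 hK hglip hgcorner hAy hAx hBx
        · by_cases hBy : ∀ i, y i ≤ -(1/2:ℝ)
          · rw [norm_sub_rev, norm_sub_rev x y]
            exact lipBC hn hδ0 hδ1 hK hglip hgodd hgcorner hBy hAx hBx
          · rw [hFun_of_C hAx hBx, hFun_of_C hAy hBy]
            exact (key_lipCC hK hglip x y).trans
              (mul_le_mul_of_nonneg_right (le_max_right _ _) (norm_nonneg _))
  refine ⟨⟨?_, ?_⟩, ?_, ?_, fun x y _ _ => lip x y, ?_⟩
  -- continuity
  · apply LipschitzOnWith.continuousOn (K := Real.toNNReal (max 2 K))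
    rw [lipschitzOnWith_iff_dist_le_mul]
    intro x _ y _
    rw [dist_eq_norm, dist_eq_norm,
      Real.coe_toNNReal _ (le_trans (by norm_num) (le_max_left 2 K))]
    exact lip x y
  -- range
  · intro x hx i
    by_cases hAx : ∀ i, (1:ℝ)/2 ≤ x i
    · have e : hFun n δ g x i = (2 * minCoord n x - 1) +
          (2 - 2 * minCoord n x) * δ * (if (i:ℕ) = 0 then 1 else 0) := by
        rw [hFun_of_A hAx]
      have h1 : (1:ℝ)/2 ≤ minCoord n x := le_minCoord hn x _ hAx
      have h2 : minCoord n x ≤ 1 := (minCoord_le hn x ⟨0, hn⟩).trans (hx ⟨0, hn⟩).2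
      rw [e, Set.mem_Icc]
      split_ifs <;> constructor <;> nlinarith
    · by_cases hBx : ∀ i, x i ≤ -(1/2:ℝ)
      · have e : hFun n δ g x i = -((2 * minCoord n (-x) - 1) +
            (2 - 2 * minCoord n (-x)) * δ * (if (i:ℕ) = 0 then 1 else 0)) := by
          rw [hFun_of_B hn hBx]
        have h1 : (1:ℝ)/2 ≤ minCoord n (-x) :=
          le_minCoord hn (-x) _ (fun j => by simp only [Pi.neg_apply]; linarith [hBx j])
        have h2 : minCoord n (-x) ≤ 1 := by
          refine (minCoord_le hn (-x) ⟨0, hn⟩).trans ?_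
          simp only [Pi.neg_apply]
          linarith [(hx ⟨0, hn⟩).1]
        rw [e, Set.mem_Icc]
        split_ifs <;> constructor <;> nlinarith
      · rw [hFun_of_C hAx hBx, Set.mem_Icc]
        have h1 := abs_coord_le_norm (g (trunc n x)) i
        have hb := hgbound (trunc n x) (trunc_mem n x)
        have h2 := abs_le.1 (h1.trans hb)
        constructor <;> linarith [h2.1, h2.2]
  -- corner
  · have hA : ∀ i : Fin n, (1:ℝ)/2 ≤ (fun _ => (1:ℝ)) i := fun i => by norm_num
    have hm : minCoord n (fun _ => (1:ℝ)) = 1 :=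
      le_antisymm (minCoord_le hn _ ⟨0, hn⟩) (le_minCoord hn _ 1 fun i => le_refl 1)
    rw [hFun_of_A hA, hm]
    funext i; split_ifs <;> ring
  -- oddness on boundary
  · intro x hx hbd
    by_cases hAx : ∀ i, (1:ℝ)/2 ≤ x i
    · have hBnx : ∀ i, (-x) i ≤ -(1/2:ℝ) := fun i => by
        simp only [Pi.neg_apply]; linarith [hAx i]
      rw [hFun_of_B hn hBnx, hFun_of_A hAx, neg_neg]
      funext i; simp
    · by_cases hBx : ∀ i, x i ≤ -(1/2:ℝ)
      · have hAnx : ∀ i, (1:ℝ)/2 ≤ (-x) i := fun i => by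
          simp only [Pi.neg_apply]; linarith [hBx i]
        rw [hFun_of_A hAnx, hFun_of_B hn hBx]
        funext i; simp
      · have hAnx : ¬ ∀ i, (1:ℝ)/2 ≤ (-x) i := by
          intro h
          exact hBx fun i => by have := h i; simp only [Pi.neg_apply] at this; linarith
        have hBnx : ¬ ∀ i, (-x) i ≤ -(1/2:ℝ) := by
          intro h
          exact hAx fun i => by have := h i; simp only [Pi.neg_apply] at this; linarith
        rw [hFun_of_C hAnx hBnx, hFun_of_C hAx hBx, trunc_neg]
        apply hgodd (trunc n x) (trunc_mem n x)
        obtain ⟨i, hi⟩ := hbd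
        rcases (abs_eq (by norm_num : (0:ℝ) ≤ 1)).1 hi with h1 | h1
        · refine ⟨i, ?_⟩
          have : trunc n x i = 1/2 := by
            rw [trunc, h1]; norm_num
          rw [this]; norm_num
        · refine ⟨i, ?_⟩
          have : trunc n x i = -(1/2) := by
            rw [trunc, h1]; norm_num
          rw [this]; norm_num
  -- (v)
  · intro ε hε0 hεδ x hx hnorm
    by_cases hAx : ∀ i, (1:ℝ)/2 ≤ x i
    · exfalso
      have e : hFun n δ g x ⟨0, hn⟩ = (2 * minCoord n x - 1) +
          (2 - 2 * minCoord n x) * δ * 1 := by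
        rw [hFun_of_A hAx]
        norm_num
      have h1 : (1:ℝ)/2 ≤ minCoord n x := le_minCoord hn x _ hAx
      have habs := abs_coord_le_norm (hFun n δ g x) ⟨0, hn⟩
      rw [e] at habs
      have h3 := (abs_le.1 (habs.trans hnorm)).2
      nlinarith
    · by_cases hBx : ∀ i, x i ≤ -(1/2:ℝ)
      · exfalso
        have e : hFun n δ g x ⟨0, hn⟩ = -((2 * minCoord n (-x) - 1) +
            (2 - 2 * minCoord n (-x)) * δ * 1) := by
          rw [hFun_of_B hn hBx]
          norm_num
        have h1 : (1:ℝ)/2 ≤ minCoord n (-x) :=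
          le_minCoord hn (-x) _ (fun j => by simp only [Pi.neg_apply]; linarith [hBx j])
        have habs := abs_coord_le_norm (hFun n δ g x) ⟨0, hn⟩
        rw [e] at habs
        have h3 := (abs_le.1 (habs.trans hnorm)).1
        nlinarith
      · exact hFun_of_C hAx hBx
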